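/- Let q be a power of an odd prime p and let F be a finite field with q elements. Then in the polynomial ring F[x,y] one has the identity x^{2q-1} + y^{2q-1} + (-x-y)^{2q-1} = x·y·(x+y)·∏_{α ∈ F, α ≠ 0, α ≠ -1} (x - α·y)^2. -/

import Mathlib

open scoped Classical

open MvPolynomial

lemma aux_prod_X_sub_C (K : Type*) [Field K] [Fintype K] :
    ∏ a : K, (Polynomial.X - Polynomial.C a) = Polynomial.X ^ (Fintype.card K) - Polynomial.X := by
  have hm : (Polynomial.X ^ (Fintype.card K) - Polynomial.X : Polynomial K).Monic :=
    Polynomial.monic_X_pow_sub (by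
      rw [Polynomial.degree_X]
      exact_mod_cast Fintype.one_lt_card (α := K))
  have hr := FiniteField.roots_X_pow_card_sub_X K
  have hd := FiniteField.X_pow_card_sub_X_natDegree_eq K (Fintype.one_lt_card (α := K))
  have h := Polynomial.prod_multiset_X_sub_C_of_monic_of_roots_card_eq hm (by rw [hr, hd]; simp)
  rw [hr] at h
  rw [← h]
  rfl

lemma aux_prod_elem {F K : Type*} [Field F] [Fintype F] [Field K] (φ : F →+* K)
    {a b : K} (hb : b ≠ 0) :
    ∏ α : F, (a - φ α * b) = a ^ Fintype.card F - a * b ^ (Fintype.card F - 1) := by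
  set q := Fintype.card F with hqdef
  have hq : 1 ≤ q := Fintype.card_pos
  set t := a * b⁻¹ with ht
  have hbt : b * t = a := by rw [ht, mul_comm, mul_assoc, inv_mul_cancel₀ hb, mul_one]
  have h0 := aux_prod_X_sub_C F
  have h1 : ∏ α : F, (t - φ α) = t ^ q - t := by
    have := congrArg (Polynomial.eval₂RingHom φ t) h0
    simpa using this
  have hbq : b ^ q = b ^ (q - 1) * b := by
    rw [← pow_succ, Nat.sub_add_cancel hq]
  calc ∏ α : F, (a - φ α * b) = ∏ α : F, (b * (t - φ α)) := by
        refine Finset.prod_congr rfl (fun α _ => ?_)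
        rw [mul_sub, hbt]; ring
    _ = b ^ q * (t ^ q - t) := by
        rw [Finset.prod_mul_distrib, Finset.prod_const, Finset.card_univ, h1, hqdef]
    _ = a ^ q - a * b ^ (q - 1) := by
        rw [mul_sub, ← mul_pow, hbt, hbq, mul_assoc, hbt]
        ring

lemma aux_prod_mv (F : Type) [Field F] [Fintype F] :
    ∏ α : F, (X 0 - C α * X 1 : MvPolynomial (Fin 2) F)
      = X 0 ^ Fintype.card F - X 0 * X 1 ^ (Fintype.card F - 1) := by
  set R := MvPolynomial (Fin 2) F
  set K := FractionRing R
  have hinj : Function.Injective (algebraMap R K) := IsFractionRing.injective R K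
  apply hinj
  have hb : algebraMap R K (X 1) ≠ 0 := by
    rw [map_ne_zero_iff _ hinj]
    exact MvPolynomial.X_ne_zero 1
  have h := aux_prod_elem (K := K) ((algebraMap R K).comp (MvPolynomial.C))
    (a := algebraMap R K (X 0)) hb
  rw [map_prod]
  simp only [map_sub, map_mul, map_pow]
  exact h

lemma aux_prod_ne_zero (F : Type) [Field F] [Fintype F] :
    ∏ α ∈ Finset.univ.filter (fun α : F => α ≠ 0), (X 0 - C α * X 1 : MvPolynomial (Fin 2) F)
      = X 0 ^ (Fintype.card F - 1) - X 1 ^ (Fintype.card F - 1) := by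
  have hq : 1 ≤ Fintype.card F := Fintype.card_pos
  have hfe : Finset.univ.filter (fun α : F => α ≠ 0) = Finset.univ.erase 0 := by
    ext a; simp [Finset.mem_erase]
  have hsplit := Finset.mul_prod_erase Finset.univ
    (fun α : F => (X 0 - C α * X 1 : MvPolynomial (Fin 2) F)) (Finset.mem_univ 0)
  rw [aux_prod_mv] at hsplit
  simp only [map_zero, zero_mul, sub_zero] at hsplit
  apply mul_left_cancel₀ (MvPolynomial.X_ne_zero (R := F) (σ := Fin 2) 0)
  rw [hfe, hsplit, mul_sub, ← pow_succ', Nat.sub_add_cancel hq]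

/-- For `F` a finite field with `q = p^f` elements (`p` an odd prime),
in `F[x,y]` one has
`x^(2q-1) + y^(2q-1) + (-x-y)^(2q-1) = x·y·(x+y)·∏_{α ∈ F, α ≠ 0, -1} (x - α·y)^2`. -/
theorem polynomial_identity_two_vars
    (p f : ℕ) (hp : p.Prime) (hodd : Odd p) (hf : 0 < f)
    (F : Type) [Field F] [Fintype F] (hF : Fintype.card F = p ^ f) :
    (X 0 : MvPolynomial (Fin 2) F) ^ (2 * p ^ f - 1)
      + (X 1) ^ (2 * p ^ f - 1)
      + (-(X 0) - X 1) ^ (2 * p ^ f - 1)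
    = X 0 * X 1 * (X 0 + X 1) *
        ∏ α ∈ Finset.univ.filter (fun α : F => α ≠ 0 ∧ α ≠ -1),
          (X 0 - C α * X 1) ^ 2 := by
  haveI : Fact p.Prime := ⟨hp⟩
  -- char of F is p
  haveI hcr : CharP F (ringChar F) := ringChar.charP F
  have hrp : (ringChar F).Prime := CharP.char_is_prime F (ringChar F)
  haveI : CharP F p := by
    obtain ⟨n, -, hc⟩ := FiniteField.card F (ringChar F)
    have hdvd : p ∣ ringChar F := by
      have : p ∣ (ringChar F) ^ (n : ℕ) := by
        rw [← hc, hF]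
        exact dvd_pow_self p hf.ne'
      exact hp.dvd_of_dvd_pow this
    have : p = ringChar F := ((Nat.prime_dvd_prime_iff_eq hp hrp).mp hdvd)
    rwa [this]
  set R := MvPolynomial (Fin 2) F
  set x : R := X 0 with hx
  set y : R := X 1 with hy
  set q := p ^ f with hqdef
  have hq1 : 1 ≤ q := Nat.one_le_pow _ _ hp.pos
  set m := q - 1 with hmdef
  have hmq : q = m + 1 := by omega
  have h2q : 2 * q - 1 = 2 * m + 1 := by omega
  have hfrob : (x + y) ^ (m + 1) = x ^ (m + 1) + y ^ (m + 1) := by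
    rw [← hmq, hqdef]
    exact add_pow_char_pow x y p f
  -- neg power
  have hneg : (-x - y : R) = -(x + y) := by ring
  rw [hneg, Odd.neg_pow ⟨m, by omega⟩, h2q]
  -- product manipulation
  have hfilter : Finset.univ.filter (fun α : F => α ≠ 0 ∧ α ≠ -1)
      = (Finset.univ.filter (fun α : F => α ≠ 0)).erase (-1) := by
    ext a
    simp [Finset.mem_erase]
    tauto
  have hmem : (-1 : F) ∈ Finset.univ.filter (fun α : F => α ≠ 0) := by simp
  have hsplit := Finset.mul_prod_erase (Finset.univ.filter (fun α : F => α ≠ 0))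
    (fun α : F => (X 0 - C α * X 1 : R)) hmem
  rw [aux_prod_ne_zero F, hF, ← hmdef] at hsplit
  simp only [map_neg, map_one, neg_mul, one_mul, sub_neg_eq_add] at hsplit
  -- hsplit : (X 0 + X 1) * ∏ α ∈ erase, (X 0 - C α * X 1) = x ^ m - y ^ m
  set P : R := ∏ α ∈ (Finset.univ.filter (fun α : F => α ≠ 0)).erase (-1),
    (X 0 - C α * X 1) with hP
  have hPprod : ∏ α ∈ Finset.univ.filter (fun α : F => α ≠ 0 ∧ α ≠ -1),
      ((X 0 : R) - C α * X 1) ^ 2 = P ^ 2 := by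
    rw [hfilter, hP, ← Finset.prod_pow]
  rw [hPprod]
  -- cancel (x+y)^2
  have hxy : (x + y : R) ≠ 0 := by
    intro h
    have := congrArg (MvPolynomial.eval (fun i : Fin 2 => if i = 0 then (1 : F) else 0)) h
    simp [hx, hy] at this
  apply mul_left_cancel₀ (pow_ne_zero 2 hxy)
  have hkey : (x + y) ^ 2 * (x + y) ^ (2 * m + 1) = ((x + y) ^ (m + 1)) ^ 2 * (x + y) := by
    rw [← pow_add, ← pow_mul, ← pow_succ]
    congr 1
    ring
  calc (x + y) ^ 2 * (x ^ (2 * m + 1) + y ^ (2 * m + 1) + -(x + y) ^ (2 * m + 1))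
      = (x + y) ^ 2 * (x ^ (2 * m + 1) + y ^ (2 * m + 1))
          - ((x + y) ^ (m + 1)) ^ 2 * (x + y) := by
        rw [mul_add, mul_neg, hkey]; ring
    _ = (x + y) ^ 2 * (x ^ (2 * m + 1) + y ^ (2 * m + 1))
          - (x ^ (m + 1) + y ^ (m + 1)) ^ 2 * (x + y) := by rw [hfrob]
    _ = x * y * (x + y) * ((x + y) * P) ^ 2 := by rw [hsplit]; ring
    _ = (x + y) ^ 2 * (x * y * (x + y) * P ^ 2) := by ring
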